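/- For integers n, m ≥ 3, the F-index of the vertex T-join of the cycle C_n and the cycle C_m is F(C_n ∨̇_T C_m) = mn(m² + n²) + 6n²m + 12m²n + 60mn + 8m + 128n. -/

import Mathlib

/-- The subdivision graph `S(G)`: a new vertex is inserted into each edge of `G`
(each edge is replaced by a path of length 2). The inserted vertices form the
right summand `↥G.edgeSet`. -/
def Sgraph {V : Type*} (G : SimpleGraph V) : SimpleGraph (V ⊕ ↥G.edgeSet) where
  Adj x y :=
    match x, y with
    | Sum.inl v, Sum.inr e => v ∈ (e : Sym2 V)
    | Sum.inr e, Sum.inl v => v ∈ (e : Sym2 V)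
    | _, _ => False
  symm := by constructor; rintro (v | e) (w | f) h <;> exact h
  loopless := by constructor; rintro (v | e) h <;> exact h

/-- The graph `R(G)`: obtained from `G` by inserting a new vertex into each edge of `G`
and joining each new vertex to the end vertices of its corresponding edge. -/
def Rgraph {V : Type*} (G : SimpleGraph V) : SimpleGraph (V ⊕ ↥G.edgeSet) where
  Adj x y :=
    match x, y with
    | Sum.inl v, Sum.inl w => G.Adj v w
    | Sum.inl v, Sum.inr e => v ∈ (e : Sym2 V)
    | Sum.inr e, Sum.inl v => v ∈ (e : Sym2 V)
    | Sum.inr _, Sum.inr _ => False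
  symm := by
    constructor
    rintro (v | e) (w | f) h
    · exact G.adj_symm h
    · exact h
    · exact h
    · exact h
  loopless := by
    constructor
    rintro (v | e) h
    · exact G.irrefl h
    · exact h

/-- The graph `Q(G)`: obtained from `G` by inserting a new vertex into each edge of `G`,
then joining by edges those pairs of new vertices lying on adjacent edges of `G`. -/
def Qgraph {V : Type*} (G : SimpleGraph V) : SimpleGraph (V ⊕ ↥G.edgeSet) where
  Adj x y :=
    match x, y with
    | Sum.inl _, Sum.inl _ => False
    | Sum.inl v, Sum.inr e => v ∈ (e : Sym2 V)
    | Sum.inr e, Sum.inl v => v ∈ (e : Sym2 V)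
    | Sum.inr e, Sum.inr f => e ≠ f ∧ ∃ v, v ∈ (e : Sym2 V) ∧ v ∈ (f : Sym2 V)
  symm := by
    constructor
    rintro (v | e) (w | f) h
    · exact h
    · exact h
    · exact h
    · exact ⟨h.1.symm, by obtain ⟨v, h1, h2⟩ := h.2; exact ⟨v, h2, h1⟩⟩
  loopless := by
    constructor
    rintro (v | e) h
    · exact h
    · exact h.1 rfl

/-- The total graph `T(G)`: obtained from `G` by inserting a new vertex into each edge,
joining each new vertex to the end vertices of its corresponding edge, and joining by
edges those pairs of new vertices lying on adjacent edges of `G`. -/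
def Tgraph {V : Type*} (G : SimpleGraph V) : SimpleGraph (V ⊕ ↥G.edgeSet) where
  Adj x y :=
    match x, y with
    | Sum.inl v, Sum.inl w => G.Adj v w
    | Sum.inl v, Sum.inr e => v ∈ (e : Sym2 V)
    | Sum.inr e, Sum.inl v => v ∈ (e : Sym2 V)
    | Sum.inr e, Sum.inr f => e ≠ f ∧ ∃ v, v ∈ (e : Sym2 V) ∧ v ∈ (f : Sym2 V)
  symm := by
    constructor
    rintro (v | e) (w | f) h
    · exact G.adj_symm h
    · exact h
    · exact h
    · exact ⟨h.1.symm, by obtain ⟨v, h1, h2⟩ := h.2; exact ⟨v, h2, h1⟩⟩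
  loopless := by
    constructor
    rintro (v | e) h
    · exact G.irrefl h
    · exact h.1 rfl

/-- The disjoint union of `H` and `K` together with all edges joining a vertex `a` of `H`
with `P a` to every vertex of `K`. -/
def joinOn {A B : Type*} (H : SimpleGraph A) (K : SimpleGraph B) (P : A → Prop) :
    SimpleGraph (A ⊕ B) where
  Adj x y :=
    match x, y with
    | Sum.inl a, Sum.inl a' => H.Adj a a'
    | Sum.inr b, Sum.inr b' => K.Adj b b'
    | Sum.inl a, Sum.inr _ => P a
    | Sum.inr _, Sum.inl a => P a
  symm := by
    constructor
    rintro (a | b) (a' | b') h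
    · exact H.adj_symm h
    · exact h
    · exact h
    · exact K.adj_symm h
  loopless := by
    constructor
    rintro (a | b) h
    · exact H.irrefl h
    · exact K.irrefl h

/-- The vertex S-join `G₁ ∨̇_S G₂`: obtained from `S(G₁)` and `G₂` by joining each vertex
of `V(G₁)` to every vertex of `G₂`. -/
def vertexSJoin {V₁ V₂ : Type*} (G₁ : SimpleGraph V₁) (G₂ : SimpleGraph V₂) :
    SimpleGraph ((V₁ ⊕ ↥G₁.edgeSet) ⊕ V₂) :=
  joinOn (Sgraph G₁) G₂ (fun x => x.isLeft)

/-- The edge S-join `G₁ ∨̱_S G₂`: obtained from `S(G₁)` and `G₂` by joining each inserted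
vertex (each vertex of `I(G₁)`) to every vertex of `G₂`. -/
def edgeSJoin {V₁ V₂ : Type*} (G₁ : SimpleGraph V₁) (G₂ : SimpleGraph V₂) :
    SimpleGraph ((V₁ ⊕ ↥G₁.edgeSet) ⊕ V₂) :=
  joinOn (Sgraph G₁) G₂ (fun x => x.isRight)

/-- The vertex R-join `G₁ ∨̇_R G₂`. -/
def vertexRJoin {V₁ V₂ : Type*} (G₁ : SimpleGraph V₁) (G₂ : SimpleGraph V₂) :
    SimpleGraph ((V₁ ⊕ ↥G₁.edgeSet) ⊕ V₂) :=
  joinOn (Rgraph G₁) G₂ (fun x => x.isLeft)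

/-- The edge R-join `G₁ ∨̱_R G₂`. -/
def edgeRJoin {V₁ V₂ : Type*} (G₁ : SimpleGraph V₁) (G₂ : SimpleGraph V₂) :
    SimpleGraph ((V₁ ⊕ ↥G₁.edgeSet) ⊕ V₂) :=
  joinOn (Rgraph G₁) G₂ (fun x => x.isRight)

/-- The vertex Q-join `G₁ ∨̇_Q G₂`. -/
def vertexQJoin {V₁ V₂ : Type*} (G₁ : SimpleGraph V₁) (G₂ : SimpleGraph V₂) :
    SimpleGraph ((V₁ ⊕ ↥G₁.edgeSet) ⊕ V₂) :=
  joinOn (Qgraph G₁) G₂ (fun x => x.isLeft)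

/-- The edge Q-join `G₁ ∨̱_Q G₂`. -/
def edgeQJoin {V₁ V₂ : Type*} (G₁ : SimpleGraph V₁) (G₂ : SimpleGraph V₂) :
    SimpleGraph ((V₁ ⊕ ↥G₁.edgeSet) ⊕ V₂) :=
  joinOn (Qgraph G₁) G₂ (fun x => x.isRight)

/-- The vertex T-join `G₁ ∨̇_T G₂`. -/
def vertexTJoin {V₁ V₂ : Type*} (G₁ : SimpleGraph V₁) (G₂ : SimpleGraph V₂) :
    SimpleGraph ((V₁ ⊕ ↥G₁.edgeSet) ⊕ V₂) :=
  joinOn (Tgraph G₁) G₂ (fun x => x.isLeft)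

/-- The edge T-join `G₁ ∨̱_T G₂`. -/
def edgeTJoin {V₁ V₂ : Type*} (G₁ : SimpleGraph V₁) (G₂ : SimpleGraph V₂) :
    SimpleGraph ((V₁ ⊕ ↥G₁.edgeSet) ⊕ V₂) :=
  joinOn (Tgraph G₁) G₂ (fun x => x.isRight)

/-- Degree of a vertex in a graph on a finite vertex type. -/
noncomputable def gdeg {V : Type*} [Finite V] (G : SimpleGraph V) (v : V) : ℕ :=
  haveI : Fintype ↥(G.neighborSet v) := Fintype.ofFinite _
  G.degree v

/-- The forgotten topological index (F-index): `F(G) = ∑_{v ∈ V(G)} d_G(v)³`. -/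
noncomputable def Findex {V : Type*} [Finite V] (G : SimpleGraph V) : ℕ :=
  haveI := Fintype.ofFinite V
  ∑ v : V, gdeg G v ^ 3

/-- The first Zagreb index: `M₁(G) = ∑_{v ∈ V(G)} d_G(v)²`. -/
noncomputable def M1 {V : Type*} [Finite V] (G : SimpleGraph V) : ℕ :=
  haveI := Fintype.ofFinite V
  ∑ v : V, gdeg G v ^ 2

/-- `M₄(G) = ∑_{v ∈ V(G)} d_G(v)⁴`. -/
noncomputable def M4 {V : Type*} [Finite V] (G : SimpleGraph V) : ℕ :=
  haveI := Fintype.ofFinite V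
  ∑ v : V, gdeg G v ^ 4

/-- The hyper Zagreb index: `HM(G) = ∑_{uv ∈ E(G)} (d_G(u) + d_G(v))²`. -/
noncomputable def HM {V : Type*} [Finite V] (G : SimpleGraph V) : ℕ :=
  haveI : Fintype ↥G.edgeSet := Fintype.ofFinite _
  ∑ e : ↥G.edgeSet,
    Sym2.lift ⟨fun u v => (gdeg G u + gdeg G v) ^ 2,
      fun u v => by dsimp only; rw [add_comm]⟩ (e : Sym2 V)

/-- The redefined Zagreb index:
`ReZM(G) = ∑_{uv ∈ E(G)} d_G(u) d_G(v) (d_G(u) + d_G(v))`. -/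
noncomputable def ReZM {V : Type*} [Finite V] (G : SimpleGraph V) : ℕ :=
  haveI : Fintype ↥G.edgeSet := Fintype.ofFinite _
  ∑ e : ↥G.edgeSet,
    Sym2.lift ⟨fun u v => gdeg G u * gdeg G v * (gdeg G u + gdeg G v),
      fun u v => by dsimp only; ring⟩ (e : Sym2 V)

/-- The number of edges of `G`. -/
noncomputable def numEdges {V : Type*} (G : SimpleGraph V) : ℕ :=
  Nat.card ↥G.edgeSet

open SimpleGraph

lemma degree_eq_natCard {V : Type*} (G : SimpleGraph V) (v : V)
    (i : Fintype ↥(G.neighborSet v)) :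
    @SimpleGraph.degree _ G v i = Nat.card (G.neighborSet v) := by
  rw [← SimpleGraph.card_neighborSet_eq_degree, Nat.card_eq_fintype_card]

lemma gdeg_eq_natCard {V : Type*} [Finite V] (G : SimpleGraph V) (v : V) :
    gdeg G v = Nat.card (G.neighborSet v) :=
  degree_eq_natCard G v _

lemma natCard_incident {V : Type*} [Finite V] (G : SimpleGraph V) (v : V) :
    Nat.card {e : ↥G.edgeSet // v ∈ (e : Sym2 V)} = gdeg G v := by
  classical
  haveI := Fintype.ofFinite V
  have h1 : Nat.card {e : ↥G.edgeSet // v ∈ (e : Sym2 V)} = Nat.card ↥(G.incidenceSet v) := by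
    apply Nat.card_congr
    refine ⟨fun x => ⟨x.1.1, x.1.2, x.2⟩, fun s => ⟨⟨s.1, s.2.1⟩, s.2.2⟩, ?_, ?_⟩
    · intro x; rfl
    · intro s; rfl
  rw [h1, gdeg_eq_natCard, Nat.card_eq_fintype_card, Nat.card_eq_fintype_card]
  rw [SimpleGraph.card_neighborSet_eq_degree, SimpleGraph.card_incidenceSet_eq_degree]

lemma gdeg_cycle {n : ℕ} (hn : 3 ≤ n) (v : Fin n) : gdeg (cycleGraph n) v = 2 := by
  obtain ⟨k, rfl⟩ : ∃ k, n = k + 3 := ⟨n - 3, by omega⟩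
  rw [gdeg_eq_natCard, ← degree_eq_natCard (i := SimpleGraph.neighborSetFintype _ _)]
  exact SimpleGraph.cycleGraph_degree_three_le

section DegLemmas
variable {V₁ V₂ : Type*} [Finite V₁] [Finite V₂] (G₁ : SimpleGraph V₁) (G₂ : SimpleGraph V₂)

lemma gdeg_vertexTJoin_inl_inl (v : V₁) :
    gdeg (vertexTJoin G₁ G₂) (Sum.inl (Sum.inl v)) = 2 * gdeg G₁ v + Nat.card V₂ := by
  rw [gdeg_eq_natCard]
  have h : Nat.card ↥((vertexTJoin G₁ G₂).neighborSet (Sum.inl (Sum.inl v)))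
      = Nat.card ((↥(G₁.neighborSet v) ⊕ {e : ↥G₁.edgeSet // v ∈ (e : Sym2 V₁)}) ⊕ V₂) := by
    apply Nat.card_congr
    refine Equiv.subtypeSum.trans (Equiv.sumCongr (Equiv.subtypeSum.trans
      (Equiv.sumCongr (Equiv.refl _) (Equiv.refl _))) (Equiv.subtypeUnivEquiv fun b => rfl))
  rw [h, Nat.card_sum, Nat.card_sum, ← gdeg_eq_natCard, natCard_incident]
  ring

lemma gdeg_vertexTJoin_inr (b : V₂) :
    gdeg (vertexTJoin G₁ G₂) (Sum.inr b) = gdeg G₂ b + Nat.card V₁ := by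
  rw [gdeg_eq_natCard]
  haveI : IsEmpty {e : ↥G₁.edgeSet //
      ((vertexTJoin G₁ G₂).Adj (Sum.inr b) (Sum.inl (Sum.inr e)))} :=
    ⟨fun x => by simpa [vertexTJoin, joinOn] using x.2⟩
  have h : Nat.card ↥((vertexTJoin G₁ G₂).neighborSet (Sum.inr b))
      = Nat.card ((V₁ ⊕ {e : ↥G₁.edgeSet //
          ((vertexTJoin G₁ G₂).Adj (Sum.inr b) (Sum.inl (Sum.inr e)))}) ⊕ ↥(G₂.neighborSet b)) := by
    apply Nat.card_congr
    refine Equiv.subtypeSum.trans (Equiv.sumCongr (Equiv.subtypeSum.trans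
      (Equiv.sumCongr (Equiv.subtypeUnivEquiv fun a => rfl) (Equiv.refl _))) (Equiv.refl _))
  rw [h, Nat.card_sum, Nat.card_sum,
    Nat.card_of_isEmpty (α := {e : ↥G₁.edgeSet //
      ((vertexTJoin G₁ G₂).Adj (Sum.inr b) (Sum.inl (Sum.inr e)))}), ← gdeg_eq_natCard]
  ring

lemma gdeg_vertexTJoin_inl_inr (e : ↥G₁.edgeSet) (u w : V₁)
    (he : (e : Sym2 V₁) = s(u, w)) (huw : G₁.Adj u w) (hu : gdeg G₁ u = 2)
    (hw : gdeg G₁ w = 2) :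
    gdeg (vertexTJoin G₁ G₂) (Sum.inl (Sum.inr e)) = 4 := by
  classical
  rw [gdeg_eq_natCard]
  haveI : IsEmpty {b : V₂ // ((vertexTJoin G₁ G₂).Adj (Sum.inl (Sum.inr e)) (Sum.inr b))} :=
    ⟨fun x => by simpa [vertexTJoin, joinOn] using x.2⟩
  have h : Nat.card ↥((vertexTJoin G₁ G₂).neighborSet (Sum.inl (Sum.inr e)))
      = Nat.card (({x : V₁ // x ∈ (e : Sym2 V₁)} ⊕
          {f : ↥G₁.edgeSet // e ≠ f ∧ ∃ x, x ∈ (e : Sym2 V₁) ∧ x ∈ (f : Sym2 V₁)}) ⊕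
          {b : V₂ // ((vertexTJoin G₁ G₂).Adj (Sum.inl (Sum.inr e)) (Sum.inr b))}) := by
    apply Nat.card_congr
    refine Equiv.subtypeSum.trans (Equiv.sumCongr (Equiv.subtypeSum.trans
      (Equiv.sumCongr (Equiv.refl _) (Equiv.refl _))) (Equiv.refl _))
  rw [h, Nat.card_sum, Nat.card_sum,
    Nat.card_of_isEmpty (α := {b : V₂ // ((vertexTJoin G₁ G₂).Adj (Sum.inl (Sum.inr e)) (Sum.inr b))})]
  -- first count
  have hc1 : Nat.card {x : V₁ // x ∈ (e : Sym2 V₁)} = 2 := by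
    have : {x : V₁ | x ∈ (e : Sym2 V₁)} = {u, w} := by
      ext x; simp [he, Sym2.mem_iff]
    rw [show {x : V₁ // x ∈ (e : Sym2 V₁)} = ↥{x : V₁ | x ∈ (e : Sym2 V₁)} from rfl,
      Nat.card_coe_set_eq, this, Set.ncard_pair huw.ne]
  -- second count
  have hc2 : Nat.card {f : ↥G₁.edgeSet // e ≠ f ∧ ∃ x, x ∈ (e : Sym2 V₁) ∧ x ∈ (f : Sym2 V₁)} = 2 := by
    set A : Set ↥G₁.edgeSet := {f | u ∈ (f : Sym2 V₁)} with hA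
    set B : Set ↥G₁.edgeSet := {f | w ∈ (f : Sym2 V₁)} with hB
    have hSE : {f : ↥G₁.edgeSet | e ≠ f ∧ ∃ x, x ∈ (e : Sym2 V₁) ∧ x ∈ (f : Sym2 V₁)}
        = (A ∪ B) \ {e} := by
      ext f
      simp only [Set.mem_setOf_eq, Set.mem_diff, Set.mem_union, hA, hB, he, Sym2.mem_iff,
        Set.mem_singleton_iff]
      constructor
      · rintro ⟨hne, x, (rfl | rfl), hxf⟩
        · exact ⟨Or.inl hxf, fun h => hne h.symm⟩
        · exact ⟨Or.inr hxf, fun h => hne h.symm⟩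
      · rintro ⟨(h | h), hne⟩
        · exact ⟨fun h' => hne h'.symm, u, Or.inl rfl, h⟩
        · exact ⟨fun h' => hne h'.symm, w, Or.inr rfl, h⟩
    have hAB : A ∩ B = {e} := by
      ext f
      simp only [Set.mem_inter_iff, hA, hB, Set.mem_setOf_eq, Set.mem_singleton_iff]
      rw [Sym2.mem_and_mem_iff huw.ne]
      constructor
      · intro hf; apply Subtype.ext; rw [hf, he]
      · rintro rfl; exact he
    have hcardA : A.ncard = 2 := by
      rw [← Nat.card_coe_set_eq]
      exact (natCard_incident G₁ u).trans hu
    have hcardB : B.ncard = 2 := by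
      rw [← Nat.card_coe_set_eq]
      exact (natCard_incident G₁ w).trans hw
    have hunion : (A ∪ B).ncard = 3 := by
      have := Set.ncard_union_add_ncard_inter A B (Set.toFinite _) (Set.toFinite _)
      rw [hAB, hcardA, hcardB, Set.ncard_singleton] at this
      omega
    have heAB : e ∈ A ∪ B := Or.inl (by rw [hA]; simp only [Set.mem_setOf_eq, he, Sym2.mem_iff]; tauto)
    have : ((A ∪ B) \ {e}).ncard = 2 := by
      rw [Set.ncard_diff_singleton_of_mem heAB, hunion]
    rw [show {f : ↥G₁.edgeSet // e ≠ f ∧ ∃ x, x ∈ (e : Sym2 V₁) ∧ x ∈ (f : Sym2 V₁)}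
        = ↥{f : ↥G₁.edgeSet | e ≠ f ∧ ∃ x, x ∈ (e : Sym2 V₁) ∧ x ∈ (f : Sym2 V₁)} from rfl,
      Nat.card_coe_set_eq, hSE, this]
  rw [hc1, hc2]

end DegLemmas

lemma Findex_eq_sum {V : Type*} [Fintype V] (G : SimpleGraph V) :
    Findex G = ∑ v, gdeg G v ^ 3 := by
  unfold Findex
  congr!

lemma card_edge_cycle {n : ℕ} (hn : 3 ≤ n) :
    Nat.card ↥(SimpleGraph.cycleGraph n).edgeSet = n := by
  classical
  have h := SimpleGraph.sum_degrees_eq_twice_card_edges (cycleGraph n)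
  have hdeg : ∀ v : Fin n, (cycleGraph n).degree v = 2 := fun v => by
    rw [degree_eq_natCard, ← gdeg_eq_natCard]; exact gdeg_cycle hn v
  rw [Finset.sum_congr rfl (fun v _ => hdeg v), Finset.sum_const, Finset.card_univ,
    Fintype.card_fin, smul_eq_mul] at h
  rw [Nat.card_eq_fintype_card, ← SimpleGraph.edgeFinset_card]
  omega

theorem Findex_vertexTJoin_ex18' (n m : ℕ) (hn : 3 ≤ n) (hm : 3 ≤ m) :
    (Findex (vertexTJoin (SimpleGraph.cycleGraph n) (SimpleGraph.cycleGraph m)) : ℤ) =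
      (m : ℤ) * (n : ℤ) * ((m : ℤ) ^ 2 + (n : ℤ) ^ 2) + 6 * (n : ℤ) ^ 2 * (m : ℤ) + 12 * (m : ℤ) ^ 2 * (n : ℤ) + 60 * (m : ℤ) * (n : ℤ) + 8 * (m : ℤ) + 128 * (n : ℤ) := by
  classical
  set G₁ := SimpleGraph.cycleGraph n
  set G₂ := SimpleGraph.cycleGraph m
  have key : Findex (vertexTJoin G₁ G₂) = n * (m + 4) ^ 3 + 64 * n + m * (n + 2) ^ 3 := by
    rw [Findex_eq_sum, Fintype.sum_sum_type, Fintype.sum_sum_type]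
    have h1 : ∀ v : Fin n, gdeg (vertexTJoin G₁ G₂) (Sum.inl (Sum.inl v)) ^ 3 = (m + 4) ^ 3 := by
      intro v
      rw [gdeg_vertexTJoin_inl_inl, gdeg_cycle hn, Nat.card_eq_fintype_card, Fintype.card_fin]
      ring_nf
    have h2 : ∀ e : ↥G₁.edgeSet, gdeg (vertexTJoin G₁ G₂) (Sum.inl (Sum.inr e)) ^ 3 = 64 := by
      rintro ⟨s, hs⟩
      induction s using Sym2.ind with
      | _ u w =>
        have huw : G₁.Adj u w := (SimpleGraph.mem_edgeSet G₁).mp hs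
        rw [gdeg_vertexTJoin_inl_inr G₁ G₂ ⟨s(u, w), hs⟩ u w rfl huw
          (gdeg_cycle hn u) (gdeg_cycle hn w)]
        norm_num
    have h3 : ∀ b : Fin m, gdeg (vertexTJoin G₁ G₂) (Sum.inr b) ^ 3 = (n + 2) ^ 3 := by
      intro b
      rw [gdeg_vertexTJoin_inr, gdeg_cycle hm, Nat.card_eq_fintype_card, Fintype.card_fin]
      ring_nf
    rw [Finset.sum_congr rfl (fun v _ => h1 v), Finset.sum_congr rfl (fun e _ => h2 e),
      Finset.sum_congr rfl (fun b _ => h3 b), Finset.sum_const, Finset.sum_const,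
      Finset.sum_const, Finset.card_univ, Finset.card_univ, Finset.card_univ,
      Fintype.card_fin, Fintype.card_fin, ← Nat.card_eq_fintype_card, card_edge_cycle hn]
    simp [mul_comm]
  rw [key]
  push_cast
  ring

theorem Findex_vertexTJoin_ex18 (n m : ℕ) (hn : 3 ≤ n) (hm : 3 ≤ m) :
    (Findex (vertexTJoin (SimpleGraph.cycleGraph n) (SimpleGraph.cycleGraph m)) : ℤ) =
      (m : ℤ) * (n : ℤ) * ((m : ℤ) ^ 2 + (n : ℤ) ^ 2) + 6 * (n : ℤ) ^ 2 * (m : ℤ) + 12 * (m : ℤ) ^ 2 * (n : ℤ) + 60 * (m : ℤ) * (n : ℤ) + 8 * (m : ℤ) + 128 * (n : ℤ) := by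
  exact Findex_vertexTJoin_ex18' n m hn hm
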